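/- arXiv:2604.17160 — 6 statements merged into one kernel-verified Lean document; each statement's English description precedes it below -/
import Mathlib

section
/- Let θ and Y be integrable real random variables and B a random variable in (0,1), with B, Y, θ independent, satisfying the distributional equation θ =_d BY + (1-B)θ. Then for any integer p ≥ 1 such that E|Y|^p < ∞ and E|θ|^p < ∞, and any real x: E[(θ-x)^p] = (1 - E[(1-B)^p])^{-1} · Σ_{j=0}^{p-1} C(p,j) E[B^{p-j}(1-B)^j] · E[(Y-x)^{p-j}] · E[(θ-x)^j]. -/
open MeasureTheory ProbabilityTheory

lemma aux_int_pow {Ω : Type*} [MeasurableSpace Ω] (μ : Measure Ω) [IsProbabilityMeasure μ]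
    {W : Ω → ℝ} (hW : Measurable W) {p : ℕ}
    (hWp : Integrable (fun ω => |W ω| ^ p) μ) (x : ℝ) {q : ℕ} (hq : q ≤ p) :
    Integrable (fun ω => (W ω - x) ^ q) μ := by
  refine Integrable.mono (g := fun ω => (2:ℝ)^p * ((1+|x|)^p + |W ω|^p))
    (((integrable_const _).add hWp).const_mul _)
    ((hW.sub_const x).pow_const q).aestronglyMeasurable ?_
  filter_upwards with ω
  rw [Real.norm_eq_abs, Real.norm_eq_abs, abs_pow]
  have hxa : (0:ℝ) ≤ |x| := abs_nonneg x
  have hWa : (0:ℝ) ≤ |W ω| := abs_nonneg _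
  have hRHS : (0:ℝ) ≤ (2:ℝ)^p * ((1+|x|)^p + |W ω|^p) := by positivity
  rw [abs_of_nonneg hRHS]
  have h1 : |W ω - x| ≤ 1 + |x| + |W ω| := by
    calc |W ω - x| ≤ |W ω| + |x| := abs_sub _ _
      _ ≤ 1 + |x| + |W ω| := by linarith
  calc |W ω - x| ^ q ≤ (1 + |x| + |W ω|) ^ q :=
        pow_le_pow_left₀ (abs_nonneg _) h1 q
    _ ≤ (1 + |x| + |W ω|) ^ p := pow_le_pow_right₀ (by linarith) hq
    _ ≤ (2 * max (1 + |x|) (|W ω|)) ^ p := by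
        apply pow_le_pow_left₀ (by linarith)
        rcases le_total (1 + |x|) (|W ω|) with h | h
        · rw [max_eq_right h]; linarith
        · rw [max_eq_left h]; linarith
    _ = 2 ^ p * (max (1 + |x|) (|W ω|)) ^ p := mul_pow _ _ _
    _ ≤ 2 ^ p * ((1+|x|)^p + |W ω|^p) := by
        gcongr 2^p * ?_
        rcases max_cases (1 + |x|) (|W ω|) with ⟨h, _⟩ | ⟨h, _⟩ <;> rw [h]
        · nlinarith [pow_nonneg hWa p]
        · nlinarith [pow_nonneg (by linarith : (0:ℝ) ≤ 1 + |x|) p]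

theorem stmt_2 {Ω : Type*} [MeasurableSpace Ω] (μ : Measure Ω) [IsProbabilityMeasure μ]
    (B Y θ : Ω → ℝ) (hB : Measurable B) (hY : Measurable Y) (hθ : Measurable θ)
    (hrange : ∀ᵐ ω ∂μ, B ω ∈ Set.Ioo (0:ℝ) 1)
    (hindep : iIndepFun ![B, Y, θ] μ)
    (hdist : Measure.map θ μ = Measure.map (fun ω => B ω * Y ω + (1 - B ω) * θ ω) μ)
    (p : ℕ) (hp : 1 ≤ p)
    (hYp : Integrable (fun ω => |Y ω| ^ p) μ) (hθp : Integrable (fun ω => |θ ω| ^ p) μ)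
    (x : ℝ) :
    ∫ ω, (θ ω - x) ^ p ∂μ =
      (1 - ∫ ω, (1 - B ω) ^ p ∂μ)⁻¹ *
        ∑ j ∈ Finset.range p,
          (p.choose j : ℝ) * (∫ ω, B ω ^ (p - j) * (1 - B ω) ^ j ∂μ) *
            (∫ ω, (Y ω - x) ^ (p - j) ∂μ) * (∫ ω, (θ ω - x) ^ j ∂μ) := by
  set Z : Ω → ℝ := fun ω => B ω * Y ω + (1 - B ω) * θ ω with hZdef
  have hZm : Measurable Z := (hB.mul hY).add ((measurable_const.sub hB).mul hθ)
  -- Step 1: equality of p-th moments via the distributional identity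
  have hfm : ∀ ν : Measure ℝ, AEStronglyMeasurable (fun t : ℝ => (t - x) ^ p) ν :=
    fun ν => ((measurable_id.sub_const x).pow_const p).aestronglyMeasurable
  have key : ∫ ω, (θ ω - x) ^ p ∂μ = ∫ ω, (Z ω - x) ^ p ∂μ := by
    calc ∫ ω, (θ ω - x) ^ p ∂μ = ∫ t, (t - x) ^ p ∂(Measure.map θ μ) :=
          (integral_map hθ.aemeasurable (hfm _)).symm
      _ = ∫ t, (t - x) ^ p ∂(Measure.map Z μ) := by rw [hdist]
      _ = ∫ ω, (Z ω - x) ^ p ∂μ := integral_map hZm.aemeasurable (hfm _)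
  -- Step 2: pointwise binomial expansion
  have expand : ∀ ω, (Z ω - x) ^ p = ∑ j ∈ Finset.range (p+1),
      (p.choose j : ℝ) * (B ω ^ (p - j) * (1 - B ω) ^ j) * (Y ω - x) ^ (p - j) *
        (θ ω - x) ^ j := by
    intro ω
    have h1 : Z ω - x = (1 - B ω) * (θ ω - x) + B ω * (Y ω - x) := by
      simp only [hZdef]; ring
    rw [h1, add_pow]
    refine Finset.sum_congr rfl fun j hj => ?_
    rw [mul_pow, mul_pow]; ring
  -- Step 3: factorization of each term
  have key_j : ∀ j, j ≤ p →
      Integrable (fun ω => (p.choose j : ℝ) * (B ω ^ (p - j) * (1 - B ω) ^ j) *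
        (Y ω - x) ^ (p - j) * (θ ω - x) ^ j) μ ∧
      (∫ ω, (p.choose j : ℝ) * (B ω ^ (p - j) * (1 - B ω) ^ j) *
        (Y ω - x) ^ (p - j) * (θ ω - x) ^ j ∂μ) =
      (p.choose j : ℝ) * (∫ ω, B ω ^ (p - j) * (1 - B ω) ^ j ∂μ) *
        (∫ ω, (Y ω - x) ^ (p - j) ∂μ) * (∫ ω, (θ ω - x) ^ j ∂μ) := by
    intro j hj
    set F : Ω → ℝ := fun ω => B ω ^ (p - j) * (1 - B ω) ^ j with hF
    set G : Ω → ℝ := fun ω => (Y ω - x) ^ (p - j) with hG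
    set H : Ω → ℝ := fun ω => (θ ω - x) ^ j with hH
    have hFmeas : Measurable F := (hB.pow_const _).mul ((measurable_const.sub hB).pow_const _)
    have hGmeas : Measurable G := (hY.sub_const x).pow_const _
    have hHmeas : Measurable H := (hθ.sub_const x).pow_const _
    have hcomp : iIndepFun ![F, G, H] μ := by
      have h := hindep.comp
        ![fun b : ℝ => b ^ (p - j) * (1 - b) ^ j,
          fun y : ℝ => (y - x) ^ (p - j), fun t : ℝ => (t - x) ^ j]
        (by
          intro i
          fin_cases i
          · exact (measurable_id.pow_const _).mul ((measurable_const.sub measurable_id).pow_const _)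
          · exact (measurable_id.sub_const x).pow_const _
          · exact (measurable_id.sub_const x).pow_const _)
      have heq : ![F, G, H] = fun i =>
          ![fun b : ℝ => b ^ (p - j) * (1 - b) ^ j,
            fun y : ℝ => (y - x) ^ (p - j), fun t : ℝ => (t - x) ^ j] i ∘ ![B, Y, θ] i := by
        funext i; fin_cases i <;> rfl
      rw [heq]; exact h
    have hmeas3 : ∀ i, Measurable (![F, G, H] i) := by
      intro i; fin_cases i <;> assumption
    have hGH : IndepFun G H μ := hcomp.indepFun (show (1 : Fin 3) ≠ 2 by decide)
    have hF_GH : IndepFun F (G * H) μ :=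
      hcomp.indepFun_mul_right hmeas3 0 1 2 (by decide) (by decide)
    have hFint : Integrable F μ := by
      refine Integrable.mono (integrable_const (1:ℝ)) hFmeas.aestronglyMeasurable ?_
      filter_upwards [hrange] with ω hω
      obtain ⟨h0, h1⟩ := hω
      rw [Real.norm_eq_abs, norm_one]
      have hnn : (0:ℝ) ≤ F ω :=
        mul_nonneg (pow_nonneg h0.le _) (pow_nonneg (by linarith) _)
      rw [abs_of_nonneg hnn]
      exact mul_le_one₀ (pow_le_one₀ h0.le h1.le) (pow_nonneg (by linarith) _)
        (pow_le_one₀ (by linarith) (by linarith))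
    have hGint : Integrable G μ := aux_int_pow μ hY hYp x (Nat.sub_le p j)
    have hHint : Integrable H μ := aux_int_pow μ hθ hθp x hj
    have hGHint : Integrable (G * H) μ := hGH.integrable_mul hGint hHint
    have hFGHint : Integrable (F * (G * H)) μ := hF_GH.integrable_mul hFint hGHint
    have hfun : (fun ω => (p.choose j : ℝ) * (B ω ^ (p - j) * (1 - B ω) ^ j) *
        (Y ω - x) ^ (p - j) * (θ ω - x) ^ j) =
        fun ω => (p.choose j : ℝ) * ((F * (G * H)) ω) := by
      funext ω; simp only [Pi.mul_apply, hF, hG, hH]; ring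
    constructor
    · rw [hfun]; exact hFGHint.const_mul _
    · rw [hfun, integral_const_mul, hF_GH.integral_mul_eq_mul_integral hFint.1 hGHint.1,
        hGH.integral_mul_eq_mul_integral hGint.1 hHint.1]
      simp only [hF, hG, hH]; ring
  -- Step 4: integral of the sum
  have hsum : ∫ ω, (Z ω - x) ^ p ∂μ = ∑ j ∈ Finset.range (p+1),
      (p.choose j : ℝ) * (∫ ω, B ω ^ (p - j) * (1 - B ω) ^ j ∂μ) *
        (∫ ω, (Y ω - x) ^ (p - j) ∂μ) * (∫ ω, (θ ω - x) ^ j ∂μ) := by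
    simp only [expand]
    rw [integral_finset_sum _ (fun j hj => (key_j j (Nat.lt_succ_iff.mp (Finset.mem_range.mp hj))).1)]
    exact Finset.sum_congr rfl fun j hj =>
      (key_j j (Nat.lt_succ_iff.mp (Finset.mem_range.mp hj))).2
  -- Step 5: split off the last term
  set c : ℝ := ∫ ω, (1 - B ω) ^ p ∂μ with hc
  set M : ℝ := ∫ ω, (θ ω - x) ^ p ∂μ with hM
  set S : ℝ := ∑ j ∈ Finset.range p,
      (p.choose j : ℝ) * (∫ ω, B ω ^ (p - j) * (1 - B ω) ^ j ∂μ) *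
        (∫ ω, (Y ω - x) ^ (p - j) ∂μ) * (∫ ω, (θ ω - x) ^ j ∂μ) with hS
  have hlast : M = S + c * M := by
    have := key.trans hsum
    rw [Finset.sum_range_succ] at this
    simpa [Nat.sub_self, pow_zero, one_mul, integral_const, measure_univ] using this
  -- Step 6: c < 1
  have hcint : Integrable (fun ω => (1 - B ω) ^ p) μ := by
    refine Integrable.mono (integrable_const (1:ℝ))
      ((measurable_const.sub hB).pow_const p).aestronglyMeasurable ?_
    filter_upwards [hrange] with ω hω
    obtain ⟨h0, h1⟩ := hω
    rw [Real.norm_eq_abs, norm_one, abs_of_nonneg (pow_nonneg (by linarith) _)]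
    exact pow_le_one₀ (by linarith) (by linarith)
  have hclt : c < 1 := by
    by_contra hcon
    push_neg at hcon
    have hint : Integrable (fun ω => 1 - (1 - B ω) ^ p) μ := (integrable_const _).sub hcint
    have hposae : ∀ᵐ ω ∂μ, 0 < 1 - (1 - B ω) ^ p := by
      filter_upwards [hrange] with ω hω
      obtain ⟨h0, h1⟩ := hω
      have : (1 - B ω) ^ p < 1 :=
        pow_lt_one₀ (by linarith) (by linarith) (by omega)
      linarith
    have hIval : ∫ ω, (1 - (1 - B ω) ^ p) ∂μ = 1 - c := by
      rw [integral_sub (integrable_const _) hcint]; simp; rfl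
    have hIpos : 0 < ∫ ω, (1 - (1 - B ω) ^ p) ∂μ := by
      rw [integral_pos_iff_support_of_nonneg_ae
        (hposae.mono fun ω h => h.le) hint]
      have hsub : {ω | 0 < 1 - (1 - B ω) ^ p} ⊆ Function.support fun ω => 1 - (1 - B ω) ^ p :=
        fun ω h => ne_of_gt h
      have h1 : μ {ω | ¬ 0 < 1 - (1 - B ω) ^ p} = 0 := ae_iff.mp hposae
      refine lt_of_lt_of_le ?_ (measure_mono hsub)
      by_contra h
      push_neg at h
      have h0 : μ {ω | 0 < 1 - (1 - B ω) ^ p} = 0 := le_antisymm h zero_le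
      have huniv : μ Set.univ ≤ μ {ω | ¬ 0 < 1 - (1 - B ω) ^ p} +
          μ {ω | 0 < 1 - (1 - B ω) ^ p} := by
        refine (measure_mono fun ω _ => ?_).trans (measure_union_le _ _)
        by_cases hcase : 0 < 1 - (1 - B ω) ^ p
        · exact Or.inr hcase
        · exact Or.inl hcase
      rw [measure_univ, h1, h0] at huniv
      simp at huniv
    linarith [hIval ▸ hIpos]
  -- Step 7: solve
  have h1c : 1 - c ≠ 0 := by linarith
  rw [show M = (1 - c)⁻¹ * S by field_simp; linarith [hlast]]
end

section
/- Under the hypotheses of the stochastic equation θ =_d BY + (1-B)θ with B, Y, θ independent, B ∈ (0,1), E[Y^2] < ∞ and E[θ^2] < ∞: E[θ] = E[Y], and Var(θ) = (E[B^2]/(1 - E[(1-B)^2])) · Var(Y). -/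
open MeasureTheory ProbabilityTheory

theorem stmt_3 {Ω : Type*} [MeasurableSpace Ω] (μ : Measure Ω) [IsProbabilityMeasure μ]
    (B Y θ : Ω → ℝ) (hB : Measurable B) (hY : Measurable Y) (hθ : Measurable θ)
    (hrange : ∀ᵐ ω ∂μ, B ω ∈ Set.Ioo (0:ℝ) 1)
    (hindep : iIndepFun ![B, Y, θ] μ)
    (hdist : Measure.map θ μ = Measure.map (fun ω => B ω * Y ω + (1 - B ω) * θ ω) μ)
    (hY2 : Integrable (fun ω => Y ω ^ 2) μ) (hθ2 : Integrable (fun ω => θ ω ^ 2) μ) :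
    (∫ ω, θ ω ∂μ = ∫ ω, Y ω ∂μ) ∧
    variance θ μ = (∫ ω, B ω ^ 2 ∂μ) / (1 - ∫ ω, (1 - B ω) ^ 2 ∂μ) * variance Y μ := by
  have hmeas : ∀ i, Measurable (![B, Y, θ] i) := by
    intro i; fin_cases i <;> simpa
  -- bounds
  have hBb : ∀ᵐ ω ∂μ, ‖B ω‖ ≤ 1 := hrange.mono fun ω h => by
    rw [Real.norm_eq_abs, abs_le]; constructor <;> [linarith [h.1]; linarith [h.2]]
  have hB1b : ∀ᵐ ω ∂μ, ‖(1 : ℝ) - B ω‖ ≤ 1 := hrange.mono fun ω h => by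
    rw [Real.norm_eq_abs, abs_le]; constructor <;> [linarith [h.2]; linarith [h.1]]
  have hB2b : ∀ᵐ ω ∂μ, ‖B ω ^ 2‖ ≤ 1 := hrange.mono fun ω h => by
    rw [Real.norm_eq_abs, abs_le]; constructor <;> nlinarith [h.1, h.2]
  have hB12b : ∀ᵐ ω ∂μ, ‖(1 - B ω) ^ 2‖ ≤ 1 := hrange.mono fun ω h => by
    rw [Real.norm_eq_abs, abs_le]; constructor <;> nlinarith [h.1, h.2]
  have hBBb : ∀ᵐ ω ∂μ, ‖B ω * (1 - B ω)‖ ≤ 1 := hrange.mono fun ω h => by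
    rw [Real.norm_eq_abs, abs_le]; constructor <;> nlinarith [h.1, h.2]
  -- basic integrability
  have hYmem : MemLp Y 2 μ := (memLp_two_iff_integrable_sq hY.aestronglyMeasurable).2 hY2
  have hθmem : MemLp θ 2 μ := (memLp_two_iff_integrable_sq hθ.aestronglyMeasurable).2 hθ2
  have hYi : Integrable Y μ := hYmem.integrable one_le_two
  have hθi : Integrable θ μ := hθmem.integrable one_le_two
  have hBi : Integrable B μ := (memLp_top_of_bound hB.aestronglyMeasurable 1 hBb).integrable le_top
  have hB2i : Integrable (fun ω => B ω ^ 2) μ :=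
    (memLp_top_of_bound (hB.pow_const 2).aestronglyMeasurable 1 hB2b).integrable le_top
  have hB12i : Integrable (fun ω => (1 - B ω) ^ 2) μ :=
    (memLp_top_of_bound ((measurable_const.sub hB).pow_const 2).aestronglyMeasurable 1 hB12b).integrable le_top
  have hBBi : Integrable (fun ω => B ω * (1 - B ω)) μ :=
    (memLp_top_of_bound (hB.mul (measurable_const.sub hB)).aestronglyMeasurable 1 hBBb).integrable le_top
  -- independence facts
  have hBY : IndepFun B Y μ := by
    have := hindep.indepFun (show (0 : Fin 3) ≠ 1 by decide); simpa using this
  have hBθ : IndepFun B θ μ := by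
    have := hindep.indepFun (show (0 : Fin 3) ≠ 2 by decide); simpa using this
  have hYθ : IndepFun Y θ μ := by
    have := hindep.indepFun (show (1 : Fin 3) ≠ 2 by decide); simpa using this
  have hYθi : Integrable (fun ω => Y ω * θ ω) μ := hYθ.integrable_mul hYi hθi
  have hpk : IndepFun (fun ω => (Y ω, θ ω)) B μ := by
    have := hindep.indepFun_prodMk hmeas 1 2 0 (by decide) (by decide); simpa using this
  have hYθB : IndepFun (fun ω => Y ω * θ ω) (fun ω => B ω * (1 - B ω)) μ :=
    hpk.comp (measurable_fst.mul measurable_snd)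
      (measurable_id.mul (measurable_const.sub measurable_id))
  -- product integrability
  have I1 : Integrable (fun ω => B ω * Y ω) μ := hYi.bdd_mul hB.aestronglyMeasurable hBb
  have I2 : Integrable (fun ω => (1 - B ω) * θ ω) μ :=
    hθi.bdd_mul (measurable_const.sub hB).aestronglyMeasurable hB1b
  have I3 : Integrable (fun ω => B ω ^ 2 * Y ω ^ 2) μ :=
    hY2.bdd_mul (hB.pow_const 2).aestronglyMeasurable hB2b
  have I4 : Integrable (fun ω => (B ω * (1 - B ω)) * (Y ω * θ ω)) μ :=
    hYθi.bdd_mul (hB.mul (measurable_const.sub hB)).aestronglyMeasurable hBBb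
  have I5 : Integrable (fun ω => (1 - B ω) ^ 2 * θ ω ^ 2) μ :=
    hθ2.bdd_mul ((measurable_const.sub hB).pow_const 2).aestronglyMeasurable hB12b
  -- RHS measurability
  have hRHS : Measurable (fun ω => B ω * Y ω + (1 - B ω) * θ ω) :=
    (hB.mul hY).add ((measurable_const.sub hB).mul hθ)
  -- equal means
  have hM1 : ∫ ω, θ ω ∂μ = ∫ ω, (B ω * Y ω + (1 - B ω) * θ ω) ∂μ := by
    have h1 : ∫ ω, θ ω ∂μ = ∫ x, x ∂(Measure.map θ μ) :=
      (integral_map hθ.aemeasurable aestronglyMeasurable_id).symm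
    rw [h1, hdist]
    exact integral_map hRHS.aemeasurable aestronglyMeasurable_id
  have hM2 : ∫ ω, θ ω ^ 2 ∂μ = ∫ ω, (B ω * Y ω + (1 - B ω) * θ ω) ^ 2 ∂μ := by
    have h1 : ∫ ω, θ ω ^ 2 ∂μ = ∫ x, x ^ 2 ∂(Measure.map θ μ) :=
      (integral_map hθ.aemeasurable (continuous_pow 2).aestronglyMeasurable).symm
    rw [h1, hdist, integral_map hRHS.aemeasurable (continuous_pow 2).aestronglyMeasurable]
  -- factorize first moment
  have hBYmul : ∫ ω, B ω * Y ω ∂μ = (∫ ω, B ω ∂μ) * ∫ ω, Y ω ∂μ := by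
    have := hBY.integral_mul_eq_mul_integral hBi.aestronglyMeasurable hYi.aestronglyMeasurable
    simpa [Pi.mul_apply] using this
  have hB1θ : IndepFun (fun ω => 1 - B ω) θ μ :=
    hBθ.comp (measurable_const.sub measurable_id) measurable_id
  have hB1θmul : ∫ ω, (1 - B ω) * θ ω ∂μ = (∫ ω, (1 - B ω) ∂μ) * ∫ ω, θ ω ∂μ := by
    have := hB1θ.integral_mul_eq_mul_integral ((integrable_const 1).sub hBi).aestronglyMeasurable hθi.aestronglyMeasurable
    simpa [Pi.mul_apply] using this
  have hintB1 : ∫ ω, ((1:ℝ) - B ω) ∂μ = 1 - ∫ ω, B ω ∂μ := by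
    rw [integral_sub (integrable_const 1) hBi]; simp
  have hBpos : 0 < ∫ ω, B ω ∂μ := by
    rcases lt_or_eq_of_le (integral_nonneg_of_ae (hrange.mono fun ω h => le_of_lt h.1)) with h | h
    · exact h
    · exfalso
      have hz : B =ᵐ[μ] 0 :=
        (integral_eq_zero_iff_of_nonneg_ae (hrange.mono fun ω h => le_of_lt h.1) hBi).1 h.symm
      have := (hz.and hrange).exists
      obtain ⟨ω, h0, h1⟩ := this
      rw [h0] at h1; exact lt_irrefl _ h1.1
  have hmean : ∫ ω, θ ω ∂μ = ∫ ω, Y ω ∂μ := by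
    have := hM1
    rw [integral_add I1 I2, hBYmul, hB1θmul, hintB1] at this
    have h2 : (∫ ω, B ω ∂μ) * (∫ ω, θ ω ∂μ) = (∫ ω, B ω ∂μ) * (∫ ω, Y ω ∂μ) := by
      nlinarith [this]
    exact mul_left_cancel₀ (ne_of_gt hBpos) h2
  refine ⟨hmean, ?_⟩
  -- second moment equation
  have hexp : ∀ ω, (B ω * Y ω + (1 - B ω) * θ ω) ^ 2
      = B ω ^ 2 * Y ω ^ 2 + 2 * ((B ω * (1 - B ω)) * (Y ω * θ ω)) + (1 - B ω) ^ 2 * θ ω ^ 2 :=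
    fun ω => by ring
  have hfac3 : ∫ ω, B ω ^ 2 * Y ω ^ 2 ∂μ = (∫ ω, B ω ^ 2 ∂μ) * ∫ ω, Y ω ^ 2 ∂μ := by
    have := (hBY.comp (measurable_id.pow_const 2) (measurable_id.pow_const 2)).integral_mul_eq_mul_integral hB2i.aestronglyMeasurable hY2.aestronglyMeasurable
    simpa [Pi.mul_apply] using this
  have hfac5 : ∫ ω, (1 - B ω) ^ 2 * θ ω ^ 2 ∂μ = (∫ ω, (1 - B ω) ^ 2 ∂μ) * ∫ ω, θ ω ^ 2 ∂μ := by
    have := (hBθ.comp ((measurable_const.sub measurable_id).pow_const 2)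
      (measurable_id.pow_const 2)).integral_mul_eq_mul_integral hB12i.aestronglyMeasurable hθ2.aestronglyMeasurable
    simpa [Pi.mul_apply] using this
  have hYθmul : ∫ ω, Y ω * θ ω ∂μ = (∫ ω, Y ω ∂μ) * ∫ ω, θ ω ∂μ := by
    have := hYθ.integral_mul_eq_mul_integral hYi.aestronglyMeasurable hθi.aestronglyMeasurable
    simpa [Pi.mul_apply] using this
  have hfac4 : ∫ ω, (B ω * (1 - B ω)) * (Y ω * θ ω) ∂μ
      = (∫ ω, B ω * (1 - B ω) ∂μ) * ((∫ ω, Y ω ∂μ) * ∫ ω, θ ω ∂μ) := by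
    have := hYθB.integral_mul_eq_mul_integral hYθi.aestronglyMeasurable hBBi.aestronglyMeasurable
    rw [← hYθmul]
    simpa [Pi.mul_apply, mul_comm] using this
  have hA : ∫ ω, θ ω ^ 2 ∂μ
      = (∫ ω, B ω ^ 2 ∂μ) * (∫ ω, Y ω ^ 2 ∂μ)
        + 2 * ((∫ ω, B ω * (1 - B ω) ∂μ) * ((∫ ω, Y ω ∂μ) * ∫ ω, θ ω ∂μ))
        + (∫ ω, (1 - B ω) ^ 2 ∂μ) * ∫ ω, θ ω ^ 2 ∂μ := by
    have I34 : Integrable (fun ω => B ω ^ 2 * Y ω ^ 2 + 2 * ((B ω * (1 - B ω)) * (Y ω * θ ω))) μ :=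
      I3.add (I4.const_mul 2)
    conv_lhs => rw [hM2]; simp only [hexp]
    rw [integral_add I34 I5, integral_add I3 (I4.const_mul 2),
      integral_const_mul 2 _, hfac3, hfac4, hfac5]
  -- coefficient identity
  have hsum : (∫ ω, B ω ^ 2 ∂μ) + 2 * (∫ ω, B ω * (1 - B ω) ∂μ) + (∫ ω, (1 - B ω) ^ 2 ∂μ) = 1 := by
    have h1 : ∫ ω, (B ω ^ 2 + 2 * (B ω * (1 - B ω)) + (1 - B ω) ^ 2) ∂μ = 1 := by
      have he : ∀ ω, B ω ^ 2 + 2 * (B ω * (1 - B ω)) + (1 - B ω) ^ 2 = 1 := fun ω => by ring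
      simp only [he]; simp
    have Ic : Integrable (fun ω => B ω ^ 2 + 2 * (B ω * (1 - B ω))) μ :=
      hB2i.add (hBBi.const_mul 2)
    rwa [integral_add Ic hB12i, integral_add hB2i (hBBi.const_mul 2),
      integral_const_mul 2 _] at h1
  -- 1 - c > 0
  have hclt : (∫ ω, (1 - B ω) ^ 2 ∂μ) < 1 := by
    have hnn : ∀ᵐ ω ∂μ, 0 ≤ 1 - (1 - B ω) ^ 2 := hrange.mono fun ω h => by nlinarith [h.1, h.2]
    have hgi : Integrable (fun ω => 1 - (1 - B ω) ^ 2) μ := (integrable_const 1).sub hB12i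
    have hge : (0:ℝ) ≤ ∫ ω, (1 - (1 - B ω) ^ 2) ∂μ := integral_nonneg_of_ae hnn
    rcases lt_or_eq_of_le hge with h | h
    · have : ∫ ω, (1 - (1 - B ω) ^ 2) ∂μ = 1 - ∫ ω, (1 - B ω) ^ 2 ∂μ := by
        rw [integral_sub (integrable_const 1) hB12i]; simp
      linarith [this ▸ h]
    · exfalso
      have hz : (fun ω => 1 - (1 - B ω) ^ 2) =ᵐ[μ] 0 :=
        (integral_eq_zero_iff_of_nonneg_ae hnn hgi).1 h.symm
      obtain ⟨ω, h0, h1⟩ := (hz.and hrange).exists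
      simp only [Pi.zero_apply] at h0
      nlinarith [h1.1, h1.2]
  have hcne : (1:ℝ) - ∫ ω, (1 - B ω) ^ 2 ∂μ ≠ 0 := by linarith
  -- variance computation
  rw [variance_eq_sub hθmem, variance_eq_sub hYmem]
  simp only [Pi.pow_apply]
  rw [hmean] at hA
  set a := ∫ ω, B ω ^ 2 ∂μ
  set c := ∫ ω, (1 - B ω) ^ 2 ∂μ
  set d := ∫ ω, B ω * (1 - B ω) ∂μ
  set q2 := ∫ ω, θ ω ^ 2 ∂μ
  set y2 := ∫ ω, Y ω ^ 2 ∂μ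
  set m := ∫ ω, Y ω ∂μ
  rw [hmean]
  rw [div_mul_eq_mul_div, eq_div_iff hcne]
  linear_combination hA + m ^ 2 * hsum
end

section
/- Under the hypotheses of the stochastic equation θ =_d BY + (1-B)θ with B, Y, θ independent, B ∈ (0,1), and E|Y|^3 < ∞, E|θ|^3 < ∞: E[(θ-θ₀)^3] = (E[B^3]/(1 - E[(1-B)^3])) · E[(Y-θ₀)^3], where θ₀ = E[Y] = E[θ]. -/
open MeasureTheory ProbabilityTheory

lemma cube_bound4 (a b : ℝ) (ha : 0 ≤ a) (hb : 0 ≤ b) : (a + b) ^ 3 ≤ 4 * (a ^ 3 + b ^ 3) := by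
  nlinarith [sq_nonneg (a - b), mul_nonneg ha hb, sq_nonneg (a + b)]

lemma pow_le_one_add_cube (a : ℝ) (ha : 0 ≤ a) {k : ℕ} (hk : k ≤ 3) : a ^ k ≤ 1 + a ^ 3 := by
  rcases le_or_gt a 1 with h | h
  · have h1 : a ^ k ≤ 1 := pow_le_one₀ ha h
    have h2 : 0 ≤ a ^ 3 := pow_nonneg ha 3
    linarith
  · have h1 : a ^ k ≤ a ^ 3 := pow_le_pow_right₀ h.le hk
    linarith

lemma int_aux {Ω : Type*} [MeasurableSpace Ω] {μ : Measure Ω} [IsProbabilityMeasure μ]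
    {X : Ω → ℝ} (hX : Measurable X) (h3 : Integrable (fun ω => |X ω| ^ 3) μ) (c : ℝ)
    {k : ℕ} (hk : k ≤ 3) : Integrable (fun ω => (X ω - c) ^ k) μ := by
  refine Integrable.mono' (g := fun ω => 1 + (4 * |X ω| ^ 3 + 4 * |c| ^ 3))
    ((integrable_const 1).add ((h3.const_mul 4).add (integrable_const _)))
    (((hX.sub measurable_const).pow_const k).aestronglyMeasurable)
    (Filter.Eventually.of_forall fun ω => ?_)
  have h1 : |X ω - c| ≤ |X ω| + |c| := abs_sub _ _
  have h2 : |X ω - c| ^ 3 ≤ (|X ω| + |c|) ^ 3 :=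
    pow_le_pow_left₀ (abs_nonneg _) h1 3
  have h3' : (|X ω| + |c|) ^ 3 ≤ 4 * (|X ω| ^ 3 + |c| ^ 3) :=
    cube_bound4 _ _ (abs_nonneg _) (abs_nonneg _)
  have h4 : |X ω - c| ^ k ≤ 1 + |X ω - c| ^ 3 :=
    pow_le_one_add_cube _ (abs_nonneg _) hk
  calc ‖(X ω - c) ^ k‖ = |X ω - c| ^ k := by rw [Real.norm_eq_abs, abs_pow]
    _ ≤ 1 + (4 * |X ω| ^ 3 + 4 * |c| ^ 3) := by linarith

theorem stmt_4 {Ω : Type*} [MeasurableSpace Ω] (μ : Measure Ω) [IsProbabilityMeasure μ]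
    (B Y θ : Ω → ℝ) (hB : Measurable B) (hY : Measurable Y) (hθ : Measurable θ)
    (hrange : ∀ᵐ ω ∂μ, B ω ∈ Set.Ioo (0:ℝ) 1)
    (hindep : iIndepFun ![B, Y, θ] μ)
    (hdist : Measure.map θ μ = Measure.map (fun ω => B ω * Y ω + (1 - B ω) * θ ω) μ)
    (hY3 : Integrable (fun ω => |Y ω| ^ 3) μ) (hθ3 : Integrable (fun ω => |θ ω| ^ 3) μ)
    (θ₀ : ℝ) (hθ₀ : θ₀ = ∫ ω, Y ω ∂μ) :
    θ₀ = ∫ ω, θ ω ∂μ ∧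
    ∫ ω, (θ ω - θ₀) ^ 3 ∂μ =
      (∫ ω, B ω ^ 3 ∂μ) / (1 - ∫ ω, (1 - B ω) ^ 3 ∂μ) * ∫ ω, (Y ω - θ₀) ^ 3 ∂μ := by
  -- integrability of functions of B
  have hIB : ∀ φ : ℝ → ℝ, Measurable φ → (∀ x : ℝ, 0 < x → x < 1 → |φ x| ≤ 1) →
      Integrable (fun ω => φ (B ω)) μ := fun φ hφ hb =>
    (integrable_const (1 : ℝ)).mono' (hφ.comp hB).aestronglyMeasurable
      (hrange.mono fun ω h => by simpa [Real.norm_eq_abs] using hb _ h.1 h.2)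
  -- integrability of functions of Y and θ
  have intY : Integrable Y μ := by
    simpa using int_aux hY hY3 0 (show 1 ≤ 3 by norm_num)
  have intθ : Integrable θ μ := by
    simpa using int_aux hθ hθ3 0 (show 1 ≤ 3 by norm_num)
  -- key triple-product formula
  have key : ∀ φ ψ χ : ℝ → ℝ, Measurable φ → Measurable ψ → Measurable χ →
      Integrable (fun ω => φ (B ω)) μ → Integrable (fun ω => ψ (Y ω)) μ →
      Integrable (fun ω => χ (θ ω)) μ →
      Integrable (fun ω => φ (B ω) * ψ (Y ω) * χ (θ ω)) μ ∧
      ∫ ω, φ (B ω) * ψ (Y ω) * χ (θ ω) ∂μ =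
        (∫ ω, φ (B ω) ∂μ) * (∫ ω, ψ (Y ω) ∂μ) * (∫ ω, χ (θ ω) ∂μ) := by
    intro φ ψ χ hφ hψ hχ iφ iψ iχ
    have hcomp : iIndepFun
        ![fun ω => φ (B ω), fun ω => ψ (Y ω), fun ω => χ (θ ω)] μ := by
      have h := hindep.comp ![φ, ψ, χ] (by
        intro i; fin_cases i
        · exact hφ
        · exact hψ
        · exact hχ)
      convert h using 1
      ext i ω
      fin_cases i <;> rfl
    set f : Fin 3 → Ω → ℝ := ![fun ω => φ (B ω), fun ω => ψ (Y ω), fun ω => χ (θ ω)] with hf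
    have hmeas : ∀ i, Measurable (f i) := by
      intro i; fin_cases i
      · exact hφ.comp hB
      · exact hψ.comp hY
      · exact hχ.comp hθ
    have h01 : IndepFun (f 0) (f 1) μ := hcomp.indepFun (by decide)
    have h2 : IndepFun (f 0 * f 1) (f 2) μ :=
      hcomp.indepFun_mul_left hmeas 0 1 2 (by decide) (by decide)
    have i01 : Integrable (f 0 * f 1) μ := h01.integrable_mul iφ iψ
    have i012 : Integrable (f 0 * f 1 * f 2) μ := h2.integrable_mul i01 iχ
    have e01 : integral μ (f 0 * f 1) = integral μ (f 0) * integral μ (f 1) :=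
      h01.integral_mul_eq_mul_integral iφ.aestronglyMeasurable iψ.aestronglyMeasurable
    have e012 : integral μ (f 0 * f 1 * f 2) =
        integral μ (f 0 * f 1) * integral μ (f 2) :=
      h2.integral_mul_eq_mul_integral i01.aestronglyMeasurable iχ.aestronglyMeasurable
    constructor
    · exact i012
    · calc ∫ ω, φ (B ω) * ψ (Y ω) * χ (θ ω) ∂μ = integral μ (f 0 * f 1 * f 2) := rfl
        _ = (∫ ω, φ (B ω) ∂μ) * (∫ ω, ψ (Y ω) ∂μ) * (∫ ω, χ (θ ω) ∂μ) := by
          rw [e012, e01]; rfl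
  -- transfer of integrals via the distributional identity
  have hZmeas : Measurable (fun ω => B ω * Y ω + (1 - B ω) * θ ω) :=
    (hB.mul hY).add ((measurable_const.sub hB).mul hθ)
  have hmap : ∀ g : ℝ → ℝ, Measurable g →
      ∫ ω, g (θ ω) ∂μ = ∫ ω, g (B ω * Y ω + (1 - B ω) * θ ω) ∂μ := by
    intro g hg
    rw [← integral_map hθ.aemeasurable hg.aestronglyMeasurable, hdist,
      integral_map hZmeas.aemeasurable hg.aestronglyMeasurable]
  -- basic integrabilities of functions of B
  have intB : Integrable B μ := by
    have := hIB id measurable_id (fun x h0 h1 => by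
      simp [abs_of_pos h0]; linarith)
    simpa using this
  have int1B : Integrable (fun ω => 1 - B ω) μ := (integrable_const 1).sub intB
  have intB3 : Integrable (fun ω => B ω ^ 3) μ :=
    hIB (fun x => x ^ 3) (measurable_id.pow_const 3) (fun x h0 h1 => by
      rw [abs_pow, abs_of_pos h0]; exact pow_le_one₀ h0.le h1.le)
  have int1B3 : Integrable (fun ω => (1 - B ω) ^ 3) μ :=
    hIB (fun x => (1 - x) ^ 3) ((measurable_const.sub measurable_id).pow_const 3)
      (fun x h0 h1 => by
        rw [abs_pow, abs_of_pos (by linarith)]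
        exact pow_le_one₀ (by linarith) (by linarith))
  have intB21 : Integrable (fun ω => B ω ^ 2 * (1 - B ω)) μ :=
    hIB (fun x => x ^ 2 * (1 - x))
      ((measurable_id.pow_const 2).mul (measurable_const.sub measurable_id))
      (fun x h0 h1 => by
        show |x ^ 2 * (1 - x)| ≤ 1
        have hx2 : x ^ 2 ≤ 1 := pow_le_one₀ h0.le h1.le
        rw [abs_of_nonneg (by nlinarith)]; nlinarith)
  have intB12 : Integrable (fun ω => B ω * (1 - B ω) ^ 2) μ :=
    hIB (fun x => x * (1 - x) ^ 2)
      (measurable_id.mul ((measurable_const.sub measurable_id).pow_const 2))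
      (fun x h0 h1 => by
        show |x * (1 - x) ^ 2| ≤ 1
        have hx2 : (1 - x) ^ 2 ≤ 1 := pow_le_one₀ (by linarith) (by linarith)
        rw [abs_of_nonneg (by nlinarith)]; nlinarith)
  -- part 1 : the mean
  have hEB_pos : 0 < ∫ ω, B ω ∂μ := by
    rw [integral_pos_iff_support_of_nonneg_ae (hrange.mono fun ω h => h.1.le) intB]
    by_contra h
    push_neg at h
    have hzero : μ (Function.support B) = 0 := le_antisymm h zero_le
    have hae : ∀ᵐ ω ∂μ, B ω = 0 := by
      rw [ae_iff]
      simpa [Function.support] using hzero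
    obtain ⟨ω, h1, h2⟩ := (hae.and hrange).exists
    exact absurd h1 (ne_of_gt h2.1)
  have hmean : ∫ ω, θ ω ∂μ = θ₀ := by
    have h1 : ∫ ω, θ ω ∂μ = ∫ ω, (B ω * Y ω + (1 - B ω) * θ ω) ∂μ :=
      hmap id measurable_id
    have kBY := key id id (fun _ => 1) measurable_id measurable_id measurable_const
      intB intY (integrable_const 1)
    have kBθ := key (fun x => 1 - x) (fun _ => 1) id (measurable_const.sub measurable_id)
      measurable_const measurable_id int1B (integrable_const 1) intθ
    have iBY : Integrable (fun ω => B ω * Y ω) μ := by simpa using kBY.1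
    have iBθ : Integrable (fun ω => (1 - B ω) * θ ω) μ := by
      have := kBθ.1; simpa [mul_comm, mul_assoc, mul_left_comm] using this
    have eBY : ∫ ω, B ω * Y ω ∂μ = (∫ ω, B ω ∂μ) * (∫ ω, Y ω ∂μ) := by
      have := kBY.2; simpa using this
    have eBθ : ∫ ω, (1 - B ω) * θ ω ∂μ = (∫ ω, (1 - B ω) ∂μ) * (∫ ω, θ ω ∂μ) := by
      have := kBθ.2; simpa [mul_comm, mul_assoc, mul_left_comm] using this
    have e1B : ∫ ω, (1 - B ω) ∂μ = 1 - ∫ ω, B ω ∂μ := by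
      rw [integral_sub (integrable_const 1) intB]; simp
    rw [integral_add iBY iBθ, eBY, eBθ, e1B, ← hθ₀] at h1
    have := hEB_pos
    nlinarith [h1]
  refine ⟨hmean.symm, ?_⟩
  -- part 2 : third central moment
  have intY1 : Integrable (fun ω => Y ω - θ₀) μ := by
    simpa using int_aux hY hY3 θ₀ (show 1 ≤ 3 by norm_num)
  have intY2 : Integrable (fun ω => (Y ω - θ₀) ^ 2) μ :=
    int_aux hY hY3 θ₀ (show 2 ≤ 3 by norm_num)
  have intY3' : Integrable (fun ω => (Y ω - θ₀) ^ 3) μ :=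
    int_aux hY hY3 θ₀ le_rfl
  have intθ1 : Integrable (fun ω => θ ω - θ₀) μ := by
    simpa using int_aux hθ hθ3 θ₀ (show 1 ≤ 3 by norm_num)
  have intθ2 : Integrable (fun ω => (θ ω - θ₀) ^ 2) μ :=
    int_aux hθ hθ3 θ₀ (show 2 ≤ 3 by norm_num)
  have intθ3' : Integrable (fun ω => (θ ω - θ₀) ^ 3) μ :=
    int_aux hθ hθ3 θ₀ le_rfl
  have eY0 : ∫ ω, (Y ω - θ₀) ∂μ = 0 := by
    rw [integral_sub intY (integrable_const θ₀)]; simp [hθ₀]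
  have eθ0 : ∫ ω, (θ ω - θ₀) ∂μ = 0 := by
    rw [integral_sub intθ (integrable_const θ₀)]; simp [hmean]
  -- the four terms
  have k1 := key (fun x => x ^ 3) (fun y => (y - θ₀) ^ 3) (fun _ => 1)
    (measurable_id.pow_const 3) ((measurable_id.sub measurable_const).pow_const 3)
    measurable_const intB3 intY3' (integrable_const 1)
  have k2 := key (fun x => x ^ 2 * (1 - x)) (fun y => (y - θ₀) ^ 2) (fun t => t - θ₀)
    ((measurable_id.pow_const 2).mul (measurable_const.sub measurable_id))
    ((measurable_id.sub measurable_const).pow_const 2)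
    (measurable_id.sub measurable_const) intB21 intY2 intθ1
  have k3 := key (fun x => x * (1 - x) ^ 2) (fun y => y - θ₀) (fun t => (t - θ₀) ^ 2)
    (measurable_id.mul ((measurable_const.sub measurable_id).pow_const 2))
    (measurable_id.sub measurable_const)
    ((measurable_id.sub measurable_const).pow_const 2) intB12 intY1 intθ2
  have k4 := key (fun x => (1 - x) ^ 3) (fun _ => 1) (fun t => (t - θ₀) ^ 3)
    ((measurable_const.sub measurable_id).pow_const 3) measurable_const
    ((measurable_id.sub measurable_const).pow_const 3) int1B3 (integrable_const 1) intθ3'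
  -- integrabilities and values of the four terms
  have i1 : Integrable (fun ω => B ω ^ 3 * (Y ω - θ₀) ^ 3) μ := by simpa using k1.1
  have i2 : Integrable (fun ω => B ω ^ 2 * (1 - B ω) * (Y ω - θ₀) ^ 2 * (θ ω - θ₀)) μ := k2.1
  have i3 : Integrable (fun ω => B ω * (1 - B ω) ^ 2 * (Y ω - θ₀) * (θ ω - θ₀) ^ 2) μ := k3.1
  have i4 : Integrable (fun ω => (1 - B ω) ^ 3 * (θ ω - θ₀) ^ 3) μ := by simpa using k4.1
  have v1 : ∫ ω, B ω ^ 3 * (Y ω - θ₀) ^ 3 ∂μ =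
      (∫ ω, B ω ^ 3 ∂μ) * (∫ ω, (Y ω - θ₀) ^ 3 ∂μ) := by simpa using k1.2
  have v2 : ∫ ω, B ω ^ 2 * (1 - B ω) * (Y ω - θ₀) ^ 2 * (θ ω - θ₀) ∂μ = 0 := by
    have h := k2.2
    beta_reduce at h
    rw [h, eθ0, mul_zero]
  have v3 : ∫ ω, B ω * (1 - B ω) ^ 2 * (Y ω - θ₀) * (θ ω - θ₀) ^ 2 ∂μ = 0 := by
    have h := k3.2
    beta_reduce at h
    rw [h, eY0, mul_zero, zero_mul]
  have v4 : ∫ ω, (1 - B ω) ^ 3 * (θ ω - θ₀) ^ 3 ∂μ =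
      (∫ ω, (1 - B ω) ^ 3 ∂μ) * (∫ ω, (θ ω - θ₀) ^ 3 ∂μ) := by simpa using k4.2
  -- the expansion of the third central moment
  have h1 : ∫ ω, (θ ω - θ₀) ^ 3 ∂μ =
      ∫ ω, (B ω ^ 3 * (Y ω - θ₀) ^ 3 +
        (3 * (B ω ^ 2 * (1 - B ω) * (Y ω - θ₀) ^ 2 * (θ ω - θ₀)) +
        (3 * (B ω * (1 - B ω) ^ 2 * (Y ω - θ₀) * (θ ω - θ₀) ^ 2) +
        (1 - B ω) ^ 3 * (θ ω - θ₀) ^ 3))) ∂μ := by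
    rw [hmap (fun x => (x - θ₀) ^ 3) ((measurable_id.sub measurable_const).pow_const 3)]
    exact integral_congr_ae (Filter.Eventually.of_forall fun ω => by ring)
  have hexp : ∫ ω, (θ ω - θ₀) ^ 3 ∂μ =
      (∫ ω, B ω ^ 3 ∂μ) * (∫ ω, (Y ω - θ₀) ^ 3 ∂μ) +
      (∫ ω, (1 - B ω) ^ 3 ∂μ) * (∫ ω, (θ ω - θ₀) ^ 3 ∂μ) := by
    have i2' : Integrable (fun ω => 3 * (B ω ^ 2 * (1 - B ω) * (Y ω - θ₀) ^ 2 * (θ ω - θ₀))) μ :=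
      i2.const_mul 3
    have i3' : Integrable (fun ω => 3 * (B ω * (1 - B ω) ^ 2 * (Y ω - θ₀) * (θ ω - θ₀) ^ 2)) μ :=
      i3.const_mul 3
    have i34 : Integrable (fun ω => 3 * (B ω * (1 - B ω) ^ 2 * (Y ω - θ₀) * (θ ω - θ₀) ^ 2) +
        (1 - B ω) ^ 3 * (θ ω - θ₀) ^ 3) μ := i3'.add i4
    have i234 : Integrable (fun ω => 3 * (B ω ^ 2 * (1 - B ω) * (Y ω - θ₀) ^ 2 * (θ ω - θ₀)) +
        (3 * (B ω * (1 - B ω) ^ 2 * (Y ω - θ₀) * (θ ω - θ₀) ^ 2) +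
        (1 - B ω) ^ 3 * (θ ω - θ₀) ^ 3)) μ := i2'.add i34
    conv_lhs => rw [h1]
    rw [integral_add i1 i234, integral_add i2' i34, integral_add i3' i4,
      integral_const_mul 3, integral_const_mul 3, v1, v2, v3, v4]
    simp
  -- the denominator is positive
  have he1 : ∫ ω, (1 - B ω) ^ 3 ∂μ < 1 := by
    have hle : ∫ ω, (1 - B ω) ^ 3 ∂μ ≤ ∫ ω, (1 - B ω) ∂μ := by
      refine integral_mono_ae int1B3 int1B (hrange.mono fun ω h => ?_)
      show (1 - B ω) ^ 3 ≤ 1 - B ω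
      have h0 : (0:ℝ) < 1 - B ω := by linarith [h.2]
      have h1' : 1 - B ω ≤ 1 := by linarith [h.1]
      have h2 : (1 - B ω) ^ 2 ≤ 1 := pow_le_one₀ h0.le h1'
      nlinarith
    have e1B : ∫ ω, (1 - B ω) ∂μ = 1 - ∫ ω, B ω ∂μ := by
      rw [integral_sub (integrable_const 1) intB]; simp
    rw [e1B] at hle
    linarith [hEB_pos]
  have hne : (1:ℝ) - ∫ ω, (1 - B ω) ^ 3 ∂μ ≠ 0 := by linarith
  rw [div_mul_eq_mul_div, eq_div_iff hne]
  linear_combination hexp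
end

section
/- If B ~ Beta(a,b) with a,b > 0, then in the stochastic equation θ =_d BY + (1-B)θ (with B, Y, θ independent, E[Y^2] < ∞, E[θ^2] < ∞), the variance satisfies Var(θ) = ((a+1)/(a+2b+1)) Var(Y) = Var(Y)/(1+b*) where b* = 2b/(1+a). -/
open MeasureTheory ProbabilityTheory
open scoped ENNReal NNReal

lemma real_beta (u v : ℝ) (hu : 0 < u) (hv : 0 < v) :
    ∫ x in Set.Ioo (0:ℝ) 1, x ^ (u - 1) * (1 - x) ^ (v - 1) =
      Real.Gamma u * Real.Gamma v / Real.Gamma (u + v) := by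
  have key := Complex.Gamma_mul_Gamma_eq_betaIntegral (s := (u:ℂ)) (t := (v:ℂ))
    (by simpa using hu) (by simpa using hv)
  have hBeta : Complex.betaIntegral u v =
      ((∫ x in Set.Ioo (0:ℝ) 1, x ^ (u - 1) * (1 - x) ^ (v - 1) : ℝ) : ℂ) := by
    rw [Complex.betaIntegral, intervalIntegral.integral_of_le (by norm_num : (0:ℝ) ≤ 1),
      MeasureTheory.integral_Ioc_eq_integral_Ioo]
    have hcong : ∫ x in Set.Ioo (0:ℝ) 1, (x:ℂ) ^ ((u:ℂ) - 1) * ((1:ℂ) - x) ^ ((v:ℂ) - 1) =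
        ∫ x in Set.Ioo (0:ℝ) 1, ((x ^ (u - 1) * (1 - x) ^ (v - 1) : ℝ) : ℂ) := by
      refine setIntegral_congr_fun measurableSet_Ioo ?_
      intro x hx
      obtain ⟨hx0, hx1⟩ := hx
      dsimp only
      rw [Complex.ofReal_mul, Complex.ofReal_cpow hx0.le,
        Complex.ofReal_cpow (by linarith : (0:ℝ) ≤ 1 - x)]
      push_cast
      ring
    rw [hcong]
    exact integral_ofReal
  rw [hBeta, ← Complex.ofReal_add, Complex.Gamma_ofReal, Complex.Gamma_ofReal,
    Complex.Gamma_ofReal, ← Complex.ofReal_mul, ← Complex.ofReal_mul] at key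
  have h2 := Complex.ofReal_injective key
  have hGpos : 0 < Real.Gamma (u + v) := Real.Gamma_pos_of_pos (by linarith)
  field_simp
  linarith [h2]

lemma beta_int_pow (a b : ℝ) (ha : 0 < a) (hb : 0 < b) (n : ℕ) :
    ∫ x, x ^ n ∂((volume.restrict (Set.Ioo (0:ℝ) 1)).withDensity (fun s =>
        ENNReal.ofReal (s ^ (a - 1) * (1 - s) ^ (b - 1) * Real.Gamma (a + b) /
          (Real.Gamma a * Real.Gamma b)))) =
      Real.Gamma (a + b) * Real.Gamma (a + n) / (Real.Gamma a * Real.Gamma (a + n + b)) := by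
  have hGa := Real.Gamma_pos_of_pos ha
  have hGb := Real.Gamma_pos_of_pos hb
  have hGab := Real.Gamma_pos_of_pos (by linarith : (0:ℝ) < a + b)
  set f := fun s : ℝ => s ^ (a - 1) * (1 - s) ^ (b - 1) * Real.Gamma (a + b) /
      (Real.Gamma a * Real.Gamma b) with hf_def
  have hf : Measurable f := by fun_prop
  have hrw : (fun s => ENNReal.ofReal (f s)) = fun s => ((f s).toNNReal : ℝ≥0∞) := rfl
  rw [show (fun s : ℝ => ENNReal.ofReal (s ^ (a - 1) * (1 - s) ^ (b - 1) * Real.Gamma (a + b) /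
          (Real.Gamma a * Real.Gamma b))) = fun s => ((f s).toNNReal : ℝ≥0∞) from rfl,
    integral_withDensity_eq_integral_smul hf.real_toNNReal]
  have hcong : ∫ x in Set.Ioo (0:ℝ) 1, (f x).toNNReal • x ^ n =
      ∫ x in Set.Ioo (0:ℝ) 1, (Real.Gamma (a + b) / (Real.Gamma a * Real.Gamma b)) *
        (x ^ (a + n - 1) * (1 - x) ^ (b - 1)) := by
    refine setIntegral_congr_fun measurableSet_Ioo ?_
    intro x hx
    obtain ⟨hx0, hx1⟩ := hx
    have hfpos : 0 ≤ f x := by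
      have h1 : (0:ℝ) < x ^ (a-1) := Real.rpow_pos_of_pos hx0 _
      have h2 : (0:ℝ) < (1-x) ^ (b-1) := Real.rpow_pos_of_pos (by linarith) _
      positivity
    dsimp only
    rw [NNReal.smul_def, Real.coe_toNNReal _ hfpos, smul_eq_mul,
      show (x:ℝ) ^ n = x ^ ((n:ℕ):ℝ) from (Real.rpow_natCast x n).symm,
      show x ^ (a + (n:ℝ) - 1) = x ^ (a - 1) * x ^ ((n:ℕ):ℝ) by
        rw [← Real.rpow_add hx0]; ring_nf]
    ring
  rw [hcong, integral_const_mul, real_beta (a + n) b (by positivity) hb]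
  have hGan := Real.Gamma_pos_of_pos (show (0:ℝ) < a + n by positivity)
  have hGanb := Real.Gamma_pos_of_pos (show (0:ℝ) < a + n + b by positivity)
  field_simp

theorem stmt_5 {Ω : Type*} [MeasurableSpace Ω] (μ : Measure Ω) [IsProbabilityMeasure μ]
    (a b : ℝ) (ha : 0 < a) (hb : 0 < b)
    (B Y θ : Ω → ℝ) (hB : Measurable B) (hY : Measurable Y) (hθ : Measurable θ)
    (hBdist : Measure.map B μ =
      (volume.restrict (Set.Ioo (0:ℝ) 1)).withDensity (fun s =>
        ENNReal.ofReal (s ^ (a - 1) * (1 - s) ^ (b - 1) * Real.Gamma (a + b) /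
          (Real.Gamma a * Real.Gamma b))))
    (hindep : iIndepFun ![B, Y, θ] μ)
    (hdist : Measure.map θ μ = Measure.map (fun ω => B ω * Y ω + (1 - B ω) * θ ω) μ)
    (hY2 : Integrable (fun ω => Y ω ^ 2) μ) (hθ2 : Integrable (fun ω => θ ω ^ 2) μ) :
    variance θ μ = (a + 1) / (a + 2 * b + 1) * variance Y μ ∧
    (a + 1) / (a + 2 * b + 1) = 1 / (1 + 2 * b / (1 + a)) := by
  have hab : (0:ℝ) < a + b := by linarith
  have hab1 : (0:ℝ) < a + b + 1 := by linarith
  have hGa := Real.Gamma_pos_of_pos ha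
  have hGb := Real.Gamma_pos_of_pos hb
  have hGab := Real.Gamma_pos_of_pos hab
  -- moments of B
  have hmom : ∀ n : ℕ, ∫ ω, B ω ^ n ∂μ =
      Real.Gamma (a + b) * Real.Gamma (a + n) / (Real.Gamma a * Real.Gamma (a + n + b)) := by
    intro n
    calc ∫ ω, B ω ^ n ∂μ = ∫ x, x ^ n ∂(Measure.map B μ) :=
          (integral_map hB.aemeasurable ((measurable_id.pow_const n).aestronglyMeasurable)).symm
      _ = _ := by rw [hBdist]; exact beta_int_pow a b ha hb n
  have hm : ∫ ω, B ω ∂μ = a / (a + b) := by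
    have h := hmom 1
    simp only [pow_one, Nat.cast_one] at h
    rw [h, Real.Gamma_add_one ha.ne', show a + 1 + b = (a + b) + 1 by ring,
      Real.Gamma_add_one hab.ne']
    field_simp
  have hq : ∫ ω, B ω ^ 2 ∂μ = a * (a + 1) / ((a + b) * (a + b + 1)) := by
    have h := hmom 2
    simp only [Nat.cast_ofNat] at h
    rw [h, show a + 2 = (a + 1) + 1 by ring, Real.Gamma_add_one (by linarith : a + 1 ≠ 0),
      Real.Gamma_add_one ha.ne', show (a + 1) + 1 + b = ((a + b) + 1) + 1 by ring,
      Real.Gamma_add_one (by positivity : (a + b) + 1 ≠ 0), Real.Gamma_add_one hab.ne']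
    field_simp
  -- B ∈ (0,1) a.e.
  have haeB : ∀ᵐ ω ∂μ, B ω ∈ Set.Ioo (0:ℝ) 1 := by
    have hmap0 : Measure.map B μ (Set.Ioo (0:ℝ) 1)ᶜ = 0 := by
      rw [hBdist, withDensity_apply _ measurableSet_Ioo.compl,
        Measure.restrict_restrict measurableSet_Ioo.compl, Set.compl_inter_self,
        Measure.restrict_empty, lintegral_zero_measure]
    have h0 : μ (B ⁻¹' (Set.Ioo (0:ℝ) 1)ᶜ) = 0 := by
      rw [← Measure.map_apply hB measurableSet_Ioo.compl]; exact hmap0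
    rw [ae_iff]
    exact h0
  have hB01 : ∀ᵐ ω ∂μ, 0 ≤ B ω ∧ B ω ≤ 1 := haeB.mono fun ω h => ⟨h.1.le, h.2.le⟩
  -- integrability
  have hYm : MemLp Y 2 μ := (memLp_two_iff_integrable_sq hY.aestronglyMeasurable).2 hY2
  have hθm : MemLp θ 2 μ := (memLp_two_iff_integrable_sq hθ.aestronglyMeasurable).2 hθ2
  have hYint : Integrable Y μ := hYm.integrable one_le_two
  have hθint : Integrable θ μ := hθm.integrable one_le_two
  have hnormB : ∀ᵐ ω ∂μ, ‖B ω‖ ≤ 1 := by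
    filter_upwards [hB01] with ω h
    rw [Real.norm_eq_abs, abs_le]; exact ⟨by linarith [h.1], h.2⟩
  have hnorm1B : ∀ᵐ ω ∂μ, ‖1 - B ω‖ ≤ 1 := by
    filter_upwards [hB01] with ω h
    rw [Real.norm_eq_abs, abs_le]; constructor <;> linarith [h.1, h.2]
  have hnormB2 : ∀ᵐ ω ∂μ, ‖B ω ^ 2‖ ≤ 1 := by
    filter_upwards [hB01] with ω h
    rw [Real.norm_eq_abs, abs_le]; constructor <;> nlinarith [h.1, h.2]
  have hnorm1B2 : ∀ᵐ ω ∂μ, ‖(1 - B ω) ^ 2‖ ≤ 1 := by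
    filter_upwards [hB01] with ω h
    rw [Real.norm_eq_abs, abs_le]; constructor <;> nlinarith [h.1, h.2]
  have hnormB1B : ∀ᵐ ω ∂μ, ‖B ω * (1 - B ω)‖ ≤ 1 := by
    filter_upwards [hB01] with ω h
    rw [Real.norm_eq_abs, abs_le]; constructor <;> nlinarith [h.1, h.2]
  have hBint : Integrable B μ :=
    Integrable.mono' (integrable_const 1) hB.aestronglyMeasurable hnormB
  have hB2int : Integrable (fun ω => B ω ^ 2) μ :=
    Integrable.mono' (integrable_const 1) ((hB.pow_const 2).aestronglyMeasurable) hnormB2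
  -- independence
  have hmeas3 : ∀ i, Measurable (![B, Y, θ] i) := by
    intro i; fin_cases i <;> simpa using ‹_›
  have hBY : IndepFun B Y μ := hindep.indepFun (show (0:Fin 3) ≠ 1 by decide)
  have hBθ : IndepFun B θ μ := hindep.indepFun (show (0:Fin 3) ≠ 2 by decide)
  have hYθ : IndepFun Y θ μ := hindep.indepFun (show (1:Fin 3) ≠ 2 by decide)
  have h1Bθ : IndepFun (fun ω => 1 - B ω) θ μ :=
    hBθ.comp (measurable_const.sub measurable_id) measurable_id
  have hB2Y2 : IndepFun (fun ω => B ω ^ 2) (fun ω => Y ω ^ 2) μ :=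
    hBY.comp (measurable_id.pow_const 2) (measurable_id.pow_const 2)
  have h1B2θ2 : IndepFun (fun ω => (1 - B ω) ^ 2) (fun ω => θ ω ^ 2) μ :=
    hBθ.comp ((measurable_const.sub measurable_id).pow_const 2) (measurable_id.pow_const 2)
  have hYθB : IndepFun (fun ω => Y ω * θ ω) (fun ω => B ω * (1 - B ω)) μ :=
    (hindep.indepFun_prodMk hmeas3 1 2 0 (by decide) (by decide)).comp
      (measurable_fst.mul measurable_snd) (measurable_id.mul (measurable_const.sub measurable_id))
  -- product integrability
  have intBY : Integrable (fun ω => B ω * Y ω) μ :=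
    hYint.bdd_mul hB.aestronglyMeasurable hnormB
  have int1Bθ : Integrable (fun ω => (1 - B ω) * θ ω) μ :=
    hθint.bdd_mul ((measurable_const.sub hB).aestronglyMeasurable) hnorm1B
  have intB2Y2 : Integrable (fun ω => B ω ^ 2 * Y ω ^ 2) μ :=
    hY2.bdd_mul ((hB.pow_const 2).aestronglyMeasurable) hnormB2
  have int1B2θ2 : Integrable (fun ω => (1 - B ω) ^ 2 * θ ω ^ 2) μ :=
    hθ2.bdd_mul (((measurable_const.sub hB).pow_const 2).aestronglyMeasurable) hnorm1B2
  have intYθ : Integrable (fun ω => Y ω * θ ω) μ := hYθ.integrable_mul hYint hθint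
  have intB1BYθ : Integrable (fun ω => B ω * (1 - B ω) * (Y ω * θ ω)) μ :=
    intYθ.bdd_mul ((hB.mul (measurable_const.sub hB)).aestronglyMeasurable) hnormB1B
  have hZmeas : Measurable (fun ω => B ω * Y ω + (1 - B ω) * θ ω) :=
    (hB.mul hY).add ((measurable_const.sub hB).mul hθ)
  -- first moment equation
  have hmean : ∫ ω, θ ω ∂μ = ∫ ω, (B ω * Y ω + (1 - B ω) * θ ω) ∂μ := by
    rw [show ∫ ω, θ ω ∂μ = ∫ x, x ∂(Measure.map θ μ) from
        (integral_map (f := fun x : ℝ => x) hθ.aemeasurable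
          measurable_id.aestronglyMeasurable).symm,
      hdist, integral_map (f := fun x : ℝ => x) hZmeas.aemeasurable
        measurable_id.aestronglyMeasurable]
  have hone : ∫ ω, (1 - B ω) ∂μ = 1 - a / (a + b) := by
    rw [integral_sub (integrable_const 1) hBint, hm]
    simp
  have e1 : ∫ ω, θ ω ∂μ = a / (a + b) * (∫ ω, Y ω ∂μ)
      + (1 - a / (a + b)) * ∫ ω, θ ω ∂μ := by
    conv_lhs => rw [hmean]
    rw [integral_add intBY int1Bθ, hBY.integral_fun_mul_eq_mul_integral hB.aestronglyMeasurable
      hY.aestronglyMeasurable, h1Bθ.integral_fun_mul_eq_mul_integral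
      ((measurable_const.sub hB).aestronglyMeasurable) hθ.aestronglyMeasurable, hm, hone]
  have hEθEY : ∫ ω, θ ω ∂μ = ∫ ω, Y ω ∂μ := by
    have hmne : a / (a + b) ≠ 0 := by positivity
    have h2 : a / (a + b) * (∫ ω, θ ω ∂μ) = a / (a + b) * ∫ ω, Y ω ∂μ := by nlinarith [e1]
    exact mul_left_cancel₀ hmne h2
  -- second moment equation
  have hsq : ∫ ω, θ ω ^ 2 ∂μ = ∫ ω, (B ω * Y ω + (1 - B ω) * θ ω) ^ 2 ∂μ := by
    rw [show ∫ ω, θ ω ^ 2 ∂μ = ∫ x, x ^ 2 ∂(Measure.map θ μ) from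
        (integral_map (f := fun x : ℝ => x ^ 2) hθ.aemeasurable
          ((measurable_id.pow_const 2).aestronglyMeasurable)).symm,
      hdist, integral_map (f := fun x : ℝ => x ^ 2) hZmeas.aemeasurable
        ((measurable_id.pow_const 2).aestronglyMeasurable)]
  have hcross : ∫ ω, B ω * (1 - B ω) * (Y ω * θ ω) ∂μ =
      (a / (a + b) - a * (a + 1) / ((a + b) * (a + b + 1))) *
        ((∫ ω, Y ω ∂μ) * ∫ ω, θ ω ∂μ) := by
    rw [show (fun ω => B ω * (1 - B ω) * (Y ω * θ ω)) =
        fun ω => (Y ω * θ ω) * (B ω * (1 - B ω)) from funext fun ω => by ring,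
      hYθB.integral_fun_mul_eq_mul_integral (hY.mul hθ).aestronglyMeasurable
        (hB.mul (measurable_const.sub hB)).aestronglyMeasurable,
      hYθ.integral_fun_mul_eq_mul_integral hY.aestronglyMeasurable hθ.aestronglyMeasurable,
      show (fun ω => B ω * (1 - B ω)) = fun ω => B ω - B ω ^ 2 from funext fun ω => by ring,
      integral_sub hBint hB2int, hm, hq]
    ring
  have int2B : Integrable (fun ω => 1 - 2 * B ω) μ :=
    (integrable_const 1).sub (hBint.const_mul 2)
  have h1B2 : ∫ ω, (1 - B ω) ^ 2 ∂μ =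
      1 - 2 * (a / (a + b)) + a * (a + 1) / ((a + b) * (a + b + 1)) := by
    rw [show (fun ω => (1 - B ω) ^ 2) = fun ω => (1 - 2 * B ω) + B ω ^ 2 from
        funext fun ω => by ring,
      integral_add int2B hB2int,
      integral_sub (integrable_const 1) (hBint.const_mul 2), integral_const_mul, hm, hq]
    simp
  have e2 : ∫ ω, θ ω ^ 2 ∂μ = a * (a + 1) / ((a + b) * (a + b + 1)) * ∫ ω, Y ω ^ 2 ∂μ
      + 2 * ((a / (a + b) - a * (a + 1) / ((a + b) * (a + b + 1))) *
          ((∫ ω, Y ω ∂μ) * ∫ ω, Y ω ∂μ))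
      + (1 - 2 * (a / (a + b)) + a * (a + 1) / ((a + b) * (a + b + 1))) *
          ∫ ω, θ ω ^ 2 ∂μ := by
    conv_lhs => rw [hsq]
    rw [show (fun ω => (B ω * Y ω + (1 - B ω) * θ ω) ^ 2) =
        fun ω => B ω ^ 2 * Y ω ^ 2 + (2 * (B ω * (1 - B ω) * (Y ω * θ ω))
          + (1 - B ω) ^ 2 * θ ω ^ 2) from funext fun ω => by ring,
      integral_add intB2Y2 (show Integrable (fun ω => 2 * (B ω * (1 - B ω) * (Y ω * θ ω))
          + (1 - B ω) ^ 2 * θ ω ^ 2) μ from (intB1BYθ.const_mul 2).add int1B2θ2),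
      integral_add (intB1BYθ.const_mul 2) int1B2θ2, integral_const_mul,
      hB2Y2.integral_fun_mul_eq_mul_integral ((hB.pow_const 2).aestronglyMeasurable)
        ((hY.pow_const 2).aestronglyMeasurable),
      h1B2θ2.integral_fun_mul_eq_mul_integral (((measurable_const.sub hB).pow_const 2).aestronglyMeasurable)
        ((hθ.pow_const 2).aestronglyMeasurable),
      hcross, h1B2, hq, hEθEY, hsq]
    ring
  -- conclude
  have key : (a + 2 * b + 1) * ((∫ ω, θ ω ^ 2 ∂μ) - (∫ ω, Y ω ∂μ) ^ 2) =
      (a + 1) * ((∫ ω, Y ω ^ 2 ∂μ) - (∫ ω, Y ω ∂μ) ^ 2) := by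
    linear_combination (norm := (field_simp; ring1)) ((a + b) * (a + b + 1) / a) * e2
  have hvθ : variance θ μ = (∫ ω, θ ω ^ 2 ∂μ) - (∫ ω, Y ω ∂μ) ^ 2 := by
    rw [variance_eq_sub hθm, ← hEθEY]
    simp only [Pi.pow_apply]
  have hvY : variance Y μ = (∫ ω, Y ω ^ 2 ∂μ) - (∫ ω, Y ω ∂μ) ^ 2 := by
    rw [variance_eq_sub hYm]
    simp only [Pi.pow_apply]
  constructor
  · rw [hvθ, hvY]
    have hne : (a + 2 * b + 1) ≠ 0 := by positivity
    calc (∫ ω, θ ω ^ 2 ∂μ) - (∫ ω, Y ω ∂μ) ^ 2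
        = ((a + 2 * b + 1) * ((∫ ω, θ ω ^ 2 ∂μ) - (∫ ω, Y ω ∂μ) ^ 2)) / (a + 2 * b + 1) :=
          (mul_div_cancel_left₀ _ hne).symm
      _ = ((a + 1) * ((∫ ω, Y ω ^ 2 ∂μ) - (∫ ω, Y ω ∂μ) ^ 2)) / (a + 2 * b + 1) := by rw [key]
      _ = (a + 1) / (a + 2 * b + 1) * ((∫ ω, Y ω ^ 2 ∂μ) - (∫ ω, Y ω ∂μ) ^ 2) := by ring
  · have h1a : (0:ℝ) < 1 + a := by linarith
    have h2 : (0:ℝ) < 1 + 2 * b / (1 + a) := by positivity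
    field_simp
    ring
end

section
/- Fix b₀ > 0 and define, for x > 1/2, ρ(x) = [2x(2x+1) / ((2x-1)^2 - 1 + 3(2x-1)(b₀x+1) + 3(b₀x+1)^2)] · (b₀+1)(b₀+2)/2. Then ρ is strictly decreasing on (1/2, ∞), ρ(1) = 1, the limit of ρ(x) as x → 1/2⁺ equals (b₀+1)(b₀+2)/(2 + 3b₀ + (3/4)b₀²), and the limit as x → ∞ equals 2(b₀+1)(b₀+2)/(4 + 6b₀ + 3b₀²). -/
open Filter Topology

/-- The skewness ratio `ρ(x)` of the variance-matched `GD(2x-1, b₀x, P₀)` prior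
relative to the Dirichlet with parameter `b₀`. -/
noncomputable def skewRatio (b₀ x : ℝ) : ℝ :=
  2 * x * (2 * x + 1) /
      ((2 * x - 1) ^ 2 - 1 + 3 * (2 * x - 1) * (b₀ * x + 1) + 3 * (b₀ * x + 1) ^ 2) *
    ((b₀ + 1) * (b₀ + 2) / 2)

theorem stmt_7 (b₀ : ℝ) (hb₀ : 0 < b₀) :
    StrictAntiOn (skewRatio b₀) (Set.Ioi (1 / 2 : ℝ)) ∧
    skewRatio b₀ 1 = 1 ∧
    Tendsto (skewRatio b₀) (nhdsWithin (1 / 2) (Set.Ioi (1 / 2 : ℝ)))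
      (nhds ((b₀ + 1) * (b₀ + 2) / (2 + 3 * b₀ + 3 / 4 * b₀ ^ 2))) ∧
    Tendsto (skewRatio b₀) atTop
      (nhds (2 * (b₀ + 1) * (b₀ + 2) / (4 + 6 * b₀ + 3 * b₀ ^ 2))) := by
  have hC : (0:ℝ) < (b₀ + 1) * (b₀ + 2) / 2 := by positivity
  have hD : ∀ x : ℝ, 0 < x →
      0 < (2 * x - 1) ^ 2 - 1 + 3 * (2 * x - 1) * (b₀ * x + 1) + 3 * (b₀ * x + 1) ^ 2 := by
    intro x hx
    have h : (2 * x - 1) ^ 2 - 1 + 3 * (2 * x - 1) * (b₀ * x + 1) + 3 * (b₀ * x + 1) ^ 2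
        = (4 + 6 * b₀ + 3 * b₀ ^ 2) * x ^ 2 + (2 + 3 * b₀) * x := by ring
    rw [h]
    have h1 : 0 < 4 + 6 * b₀ + 3 * b₀ ^ 2 := by positivity
    have h2 : 0 < 2 + 3 * b₀ := by positivity
    positivity
  refine ⟨?_, ?_, ?_, ?_⟩
  · intro x hx y hy hxy
    have hx0 : (0:ℝ) < x := lt_trans (by norm_num) hx
    have hy0 : (0:ℝ) < y := lt_trans (by norm_num) hy
    have hDx := hD x hx0
    have hDy := hD y hy0
    unfold skewRatio
    apply mul_lt_mul_of_pos_right _ hC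
    rw [div_lt_div_iff₀ hDy hDx]
    have key : 2 * x * (2 * x + 1) *
          ((2 * y - 1) ^ 2 - 1 + 3 * (2 * y - 1) * (b₀ * y + 1) + 3 * (b₀ * y + 1) ^ 2)
        - 2 * y * (2 * y + 1) *
          ((2 * x - 1) ^ 2 - 1 + 3 * (2 * x - 1) * (b₀ * x + 1) + 3 * (b₀ * x + 1) ^ 2)
        = 6 * b₀ ^ 2 * x * y * (y - x) := by ring
    have hpos : 0 < 6 * b₀ ^ 2 * x * y * (y - x) :=
      mul_pos (mul_pos (mul_pos (by positivity) hx0) hy0) (sub_pos.mpr hxy)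
    linarith
  · have h1 : ((2 * (1:ℝ) - 1) ^ 2 - 1 + 3 * (2 * 1 - 1) * (b₀ * 1 + 1) + 3 * (b₀ * 1 + 1) ^ 2)
        = 3 * (b₀ + 1) * (b₀ + 2) := by ring
    have hb1 : b₀ + 1 ≠ 0 := by positivity
    have hb2 : b₀ + 2 ≠ 0 := by positivity
    rw [skewRatio, h1]
    field_simp
    ring
  · have hD2 := hD (1/2) (by norm_num)
    have hc : ContinuousAt (skewRatio b₀) (1/2) := by
      apply ContinuousAt.mul _ continuousAt_const
      exact ContinuousAt.div (by fun_prop) (by fun_prop) hD2.ne'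
    have ht : Tendsto (skewRatio b₀) (nhdsWithin (1/2) (Set.Ioi (1/2 : ℝ)))
        (nhds (skewRatio b₀ (1/2))) := hc.continuousWithinAt.tendsto
    have hval : skewRatio b₀ (1/2) = (b₀ + 1) * (b₀ + 2) / (2 + 3 * b₀ + 3 / 4 * b₀ ^ 2) := by
      have h1 : ((2 * (1/2:ℝ) - 1) ^ 2 - 1 + 3 * (2 * (1/2) - 1) * (b₀ * (1/2) + 1)
          + 3 * (b₀ * (1/2) + 1) ^ 2) = 2 + 3 * b₀ + 3 / 4 * b₀ ^ 2 := by ring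
      have h2 : (0:ℝ) < 2 + 3 * b₀ + 3 / 4 * b₀ ^ 2 := by positivity
      rw [skewRatio, h1]
      field_simp
      ring
    rwa [hval] at ht
  · set A : ℝ := 4 + 6 * b₀ + 3 * b₀ ^ 2 with hA_def
    set B : ℝ := 2 + 3 * b₀ with hB_def
    have hA : (0:ℝ) < A := by positivity
    have hB : (0:ℝ) < B := by positivity
    have hev : skewRatio b₀ =ᶠ[atTop]
        fun x => (4 + 2 / x) / (A + B / x) * ((b₀ + 1) * (b₀ + 2) / 2) := by
      filter_upwards [eventually_gt_atTop (0:ℝ)] with x hx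
      have hDx := hD x hx
      have hABx : (0:ℝ) < A + B / x := add_pos hA (div_pos hB hx)
      rw [skewRatio]
      congr 1
      rw [div_eq_div_iff hDx.ne' hABx.ne']
      field_simp
      ring
    have h2x : Tendsto (fun x : ℝ => 2 / x) atTop (nhds 0) := by
      simpa [div_eq_mul_inv] using tendsto_inv_atTop_zero.const_mul (2:ℝ)
    have hBx : Tendsto (fun x : ℝ => B / x) atTop (nhds 0) := by
      simpa [div_eq_mul_inv] using tendsto_inv_atTop_zero.const_mul B
    have hg : Tendsto (fun x : ℝ => (4 + 2 / x) / (A + B / x) * ((b₀ + 1) * (b₀ + 2) / 2))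
        atTop (nhds ((4 + 0) / (A + 0) * ((b₀ + 1) * (b₀ + 2) / 2))) := by
      exact (((tendsto_const_nhds.add h2x).div (tendsto_const_nhds.add hBx)
        (by simpa using hA.ne')).mul_const _)
    have hval : (4 + 0) / (A + 0) * ((b₀ + 1) * (b₀ + 2) / 2)
        = 2 * (b₀ + 1) * (b₀ + 2) / (4 + 6 * b₀ + 3 * b₀ ^ 2) := by
      rw [hA_def]
      have : (0:ℝ) < 4 + 6 * b₀ + 3 * b₀ ^ 2 := by positivity
      field_simp
      ring
    rw [hval] at hg
    exact hg.congr' hev.symm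
end

section
/- Let H be a probability measure on (0,1), M_{i,j} = ∫ s^i(1-s)^j dH, and δ_j = M_{1,j}/(1 - M_{0,j+1}). Define sequences by a_n = n! δ_{n-1}···δ_1 (a_1 = 1), b_1 = M_{2,0}/(1-M_{0,2}), c_1 = 2M_{1,1}/(1-M_{0,2}), and recursively b_n = (M_{2,n-1} a_{n-1} + (n-1) M_{1,n} b_{n-1})/(1 - M_{0,n+1}), c_n = (2 M_{1,n} a_n + (n-1) M_{1,n} c_{n-1})/(1 - M_{0,n+1}). Then for all n ≥ 1: b_n = (n-1)! δ_{n-1}···δ_1 (1 - w_n) where w_n = (n+1)δ_n, and c_n = (n+1)! δ_n···δ_1 = a_{n+1}. -/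
open MeasureTheory

theorem stmt_12 (H : Measure ℝ) [IsProbabilityMeasure H]
    (hsupp : H (Set.Ioo (0:ℝ) 1)ᶜ = 0)
    (M : ℕ → ℕ → ℝ) (hM : ∀ i j, M i j = ∫ s, s ^ i * (1 - s) ^ j ∂H)
    (δ : ℕ → ℝ) (hδ : ∀ j, δ j = M 1 j / (1 - M 0 (j + 1)))
    (a b c : ℕ → ℝ)
    (ha : ∀ n, 1 ≤ n → a n = n.factorial * ∏ k ∈ Finset.Icc 1 (n - 1), δ k)
    (hb1 : b 1 = M 2 0 / (1 - M 0 2))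
    (hc1 : c 1 = 2 * M 1 1 / (1 - M 0 2))
    (hb : ∀ n, 2 ≤ n →
      b n = (M 2 (n - 1) * a (n - 1) + ((n : ℝ) - 1) * M 1 n * b (n - 1)) / (1 - M 0 (n + 1)))
    (hc : ∀ n, 2 ≤ n →
      c n = (2 * M 1 n * a n + ((n : ℝ) - 1) * M 1 n * c (n - 1)) / (1 - M 0 (n + 1))) :
    ∀ n, 1 ≤ n →
      b n = (n - 1).factorial * (∏ k ∈ Finset.Icc 1 (n - 1), δ k) * (1 - ((n : ℝ) + 1) * δ n) ∧
      c n = (n + 1).factorial * ∏ k ∈ Finset.Icc 1 n, δ k := by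
  have hae : ∀ᵐ s ∂H, s ∈ Set.Ioo (0:ℝ) 1 := by
    rw [MeasureTheory.ae_iff]
    simpa [Set.compl_def] using hsupp
  have hint : ∀ i j : ℕ, Integrable (fun s : ℝ => s ^ i * (1 - s) ^ j) H := by
    intro i j
    refine Integrable.mono' (integrable_const (1:ℝ))
      (((continuous_id.pow i).mul ((continuous_const.sub continuous_id).pow j)).aestronglyMeasurable) ?_
    filter_upwards [hae] with s hs
    obtain ⟨h0, h1⟩ := hs
    rw [Real.norm_eq_abs,
      abs_of_nonneg (mul_nonneg (pow_nonneg h0.le _) (pow_nonneg (by linarith) _))]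
    exact mul_le_one₀ (pow_le_one₀ h0.le (by linarith)) (pow_nonneg (by linarith) _)
      (pow_le_one₀ (by linarith) (by linarith))
  have hM00 : M 0 0 = 1 := by
    rw [hM]; simp
  have hrec : ∀ i j, M i j = M (i+1) j + M i (j+1) := by
    intro i j
    rw [hM, hM, hM, ← integral_add (hint _ _) (hint _ _)]
    apply integral_congr_ae
    filter_upwards with s
    ring
  have hMnonneg : ∀ i j, 0 ≤ M i j := by
    intro i j
    rw [hM]
    apply integral_nonneg_of_ae
    filter_upwards [hae] with s hs
    exact mul_nonneg (pow_nonneg hs.1.le _) (pow_nonneg (by linarith [hs.2]) _)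
  have hM10pos : 0 < M 1 0 := by
    rw [hM]
    have hnn : 0 ≤ᵐ[H] fun s : ℝ => s ^ 1 * (1 - s) ^ 0 := by
      filter_upwards [hae] with s hs
      simp [hs.1.le]
    rw [integral_pos_iff_support_of_nonneg_ae hnn (hint 1 0)]
    have hIoo : H (Set.Ioo (0:ℝ) 1) = 1 := by
      have h := measure_add_measure_compl (μ := H) (measurableSet_Ioo (a := (0:ℝ)) (b := 1))
      rw [hsupp, add_zero, measure_univ] at h
      exact h
    have hsub : Set.Ioo (0:ℝ) 1 ⊆ Function.support fun s : ℝ => s ^ 1 * (1 - s) ^ 0 := by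
      intro s hs
      simp only [Function.mem_support, pow_one, pow_zero, mul_one]
      exact ne_of_gt hs.1
    calc (0:ENNReal) < 1 := by norm_num
      _ = H (Set.Ioo (0:ℝ) 1) := hIoo.symm
      _ ≤ _ := measure_mono hsub
  have Dpos : ∀ k : ℕ, 0 < 1 - M 0 (k+1) := by
    intro k
    induction k with
    | zero =>
      have h := hrec 0 0
      rw [hM00] at h
      linarith
    | succ k ih =>
      have h := hrec 0 (k+1)
      have := hMnonneg 1 (k+1)
      linarith
  have Mδeq : ∀ j : ℕ, M 1 j = δ j * (1 - M 0 (j+1)) := by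
    intro j
    rw [hδ j, div_mul_cancel₀]
    exact ne_of_gt (Dpos j)
  intro n hn
  induction n, hn using Nat.le_induction with
  | base =>
    have e1 := hrec 0 0
    have e2 := hrec 0 1
    have e3 := hrec 1 0
    norm_num at e1 e2 e3
    have D1 : (0:ℝ) < 1 - M 0 2 := Dpos 1
    constructor
    · have key : M 2 0 = (1 - M 0 2) - 2 * M 1 1 := by linarith
      rw [hb1, key, hδ 1]
      rw [show Finset.Icc 1 0 = (∅ : Finset ℕ) from rfl, Finset.prod_empty]
      norm_num
      have hD : (1 - M 0 2) ≠ 0 := ne_of_gt D1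
      field_simp
    · rw [hc1, Finset.Icc_self, Finset.prod_singleton, hδ 1]
      norm_num [mul_div_assoc]
  | succ n hn ih =>
    obtain ⟨m, rfl⟩ : ∃ m, n = m + 1 := ⟨n - 1, by omega⟩
    obtain ⟨ihb, ihc⟩ := ih
    have ham1 : a (m+1) = (m+1).factorial * ∏ k ∈ Finset.Icc 1 m, δ k := by
      simpa using ha (m+1) (by omega)
    have ham2 : a (m+2) = (m+2).factorial * ∏ k ∈ Finset.Icc 1 (m+1), δ k := by
      simpa using ha (m+2) (by omega)
    have hbn := hb (m+2) (by omega)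
    have hcn := hc (m+2) (by omega)
    simp only [show m+2-1 = m+1 from rfl] at hbn hcn
    simp only [show m+1-1 = m from rfl] at ihb
    have hprod1 : ∏ k ∈ Finset.Icc 1 (m+1), δ k = (∏ k ∈ Finset.Icc 1 m, δ k) * δ (m+1) :=
      Finset.prod_Icc_succ_top (by omega) _
    have hprod2 : ∏ k ∈ Finset.Icc 1 (m+2), δ k = (∏ k ∈ Finset.Icc 1 (m+1), δ k) * δ (m+2) :=
      Finset.prod_Icc_succ_top (by omega) _
    have e1 : M 1 (m+1) = δ (m+1) * (1 - M 0 (m+2)) := Mδeq (m+1)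
    have e2 : M 1 (m+2) = δ (m+2) * (1 - M 0 (m+3)) := Mδeq (m+2)
    have h1 : M 2 (m+1) = δ (m+1) * (1 - M 0 (m+2)) - δ (m+2) * (1 - M 0 (m+3)) := by
      have := hrec 1 (m+1)
      rw [show m+1+1 = m+2 from rfl] at this
      rw [← e1, ← e2]; linarith
    have h2 : M 0 (m+2) = δ (m+2) * (1 - M 0 (m+3)) + M 0 (m+3) := by
      have := hrec 0 (m+2)
      rw [show m+2+1 = m+3 from rfl] at this
      rw [← e2]; linarith
    have Dp : (0:ℝ) < 1 - M 0 (m+3) := Dpos (m+2)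
    have hBne : (1 - M 0 (m+2+1)) ≠ 0 := ne_of_gt Dp
    constructor
    · simp only [show m+1+1 = m+2 from rfl, show m+2-1 = m+1 from rfl]
      rw [hbn, ham1, ihb, hprod1, div_eq_iff hBne]
      simp only [show m+2+1 = m+3 from rfl, show m+1+1 = m+2 from rfl]
      rw [h1, e2, h2]
      push_cast [Nat.factorial_succ]
      ring
    · simp only [show m+1+1 = m+2 from rfl, show m+2-1 = m+1 from rfl]
      rw [hcn, ham2, ihc, hprod2, div_eq_iff hBne]
      simp only [show m+2+1 = m+3 from rfl, show m+1+1 = m+2 from rfl]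
      rw [e2]
      push_cast [Nat.factorial_succ]
      ring
end
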